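/- For j ∈ {1/2, 3/2} and τ on the positive imaginary axis (τ = iT, T > 0), R_{j,1}(τ, τ/4) equals q^{1/16} if j = 1/2 and equals 0 if j = 3/2, where q = e^{2πiτ}. -/

import Mathlib

open Real Complex Filter Topology

noncomputable section

noncomputable def Efun (x : ℝ) : ℝ := 2 * ∫ t in (0:ℝ)..x, Real.exp (-π * t^2)

noncomputable def Rfun (j m : ℝ) (τ w : ℂ) : ℂ :=
  ∑' k : ℤ,
    (((Real.sign (j + 2*m*k - 1/2 - j + 2*m) -
        Efun ((j + 2*m*k - 2*m*(w.im/τ.im)) * Real.sqrt (τ.im/m))) : ℝ) : ℂ) *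
      Complex.exp (-((π:ℂ)*Complex.I*((j:ℂ)+2*(m:ℂ)*(k:ℂ))^2*τ)/(2*(m:ℂ)) +
        2*(π:ℂ)*Complex.I*((j:ℂ)+2*(m:ℂ)*(k:ℂ))*w)

lemma efun_zero : Efun 0 = 0 := by simp [Efun]

lemma efun_neg (x : ℝ) : Efun (-x) = - Efun x := by
  have h : (∫ t in (0:ℝ)..x, Real.exp (-π * (-t)^2)) = ∫ t in (-x)..(-(0:ℝ)), Real.exp (-π * t^2) :=
    intervalIntegral.integral_comp_neg (fun t => Real.exp (-π * t^2))
  simp only [neg_sq, neg_zero] at h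
  rw [Efun, Efun, intervalIntegral.integral_symm (-x) 0, ← h]
  ring

lemma gauss_int : ∫ t in Set.Ioi (0:ℝ), Real.exp (-π * t^2) = 1/2 := by
  rw [integral_gaussian_Ioi, div_self pi_ne_zero, Real.sqrt_one]

lemma efun_split (x : ℝ) (hx : 0 ≤ x) :
    Efun x = 1 - 2 * ∫ t in Set.Ioi x, Real.exp (-π * t^2) := by
  have hint : MeasureTheory.IntegrableOn (fun t => Real.exp (-π * t^2)) (Set.Ioc 0 x) :=
    (integrable_exp_neg_mul_sq pi_pos).integrableOn
  have hint2 : MeasureTheory.IntegrableOn (fun t => Real.exp (-π * t^2)) (Set.Ioi x) :=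
    (integrable_exp_neg_mul_sq pi_pos).integrableOn
  have hu : (∫ t in Set.Ioc 0 x, Real.exp (-π * t^2)) + ∫ t in Set.Ioi x, Real.exp (-π * t^2)
      = ∫ t in Set.Ioi (0:ℝ), Real.exp (-π * t^2) := by
    rw [← MeasureTheory.setIntegral_union (Set.Ioc_disjoint_Ioi le_rfl) measurableSet_Ioi hint
      hint2, Set.Ioc_union_Ioi_eq_Ioi hx]
  rw [gauss_int] at hu
  rw [Efun, intervalIntegral.integral_of_le hx]
  linarith

lemma efun_tail_bound (x : ℝ) (hx : 0 ≤ x) :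
    0 ≤ 1 - Efun x ∧ 1 - Efun x ≤ 4 * Real.exp (-3*π*x^2/4) := by
  rw [efun_split x hx]
  have hnn : 0 ≤ ∫ t in Set.Ioi x, Real.exp (-π * t^2) :=
    MeasureTheory.setIntegral_nonneg measurableSet_Ioi (fun t _ => (Real.exp_pos _).le)
  constructor
  · linarith
  · have hb : (∫ t in Set.Ioi x, Real.exp (-π * t^2))
        ≤ ∫ t in Set.Ioi x, Real.exp (-3*π*x^2/4) * Real.exp (-(π/4) * t^2) := by
      apply MeasureTheory.setIntegral_mono_on
        ((integrable_exp_neg_mul_sq pi_pos).integrableOn)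
        (MeasureTheory.Integrable.integrableOn
          ((integrable_exp_neg_mul_sq (b := π/4) (by positivity)).const_mul
            (Real.exp (-3*π*x^2/4)))) measurableSet_Ioi
      intro t ht
      rw [← Real.exp_add, Real.exp_le_exp]
      have hxt : x ≤ t := le_of_lt ht
      have ht2 : x^2 ≤ t^2 := by nlinarith
      nlinarith [pi_pos]
    have hb2 : (∫ t in Set.Ioi x, Real.exp (-3*π*x^2/4) * Real.exp (-(π/4) * t^2))
        = Real.exp (-3*π*x^2/4) * ∫ t in Set.Ioi x, Real.exp (-(π/4) * t^2) := by
      rw [MeasureTheory.integral_const_mul]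
    have hb3 : (∫ t in Set.Ioi x, Real.exp (-(π/4) * t^2)) ≤ ∫ t : ℝ, Real.exp (-(π/4) * t^2) :=
      MeasureTheory.setIntegral_le_integral (integrable_exp_neg_mul_sq (by positivity))
        (Filter.Eventually.of_forall fun t => (Real.exp_pos _).le)
    have hb4 : (∫ t : ℝ, Real.exp (-(π/4) * t^2)) = 2 := by
      rw [integral_gaussian, show π / (π/4) = 4 by field_simp,
        show (4:ℝ) = 2^2 by norm_num, Real.sqrt_sq (by norm_num)]
    calc 1 - (1 - 2 * ∫ t in Set.Ioi x, Real.exp (-π * t^2))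
        = 2 * ∫ t in Set.Ioi x, Real.exp (-π * t^2) := by ring
      _ ≤ 2 * (Real.exp (-3*π*x^2/4) * ∫ t in Set.Ioi x, Real.exp (-(π/4) * t^2)) := by
          rw [← hb2]; linarith
      _ ≤ 4 * Real.exp (-3*π*x^2/4) := by
          have h5 : (∫ t in Set.Ioi x, Real.exp (-(π/4) * t^2)) ≤ 2 := le_trans hb3 (le_of_eq hb4)
          nlinarith [Real.exp_pos (-3*π*x^2/4), MeasureTheory.setIntegral_nonneg
            (μ := MeasureTheory.volume) (measurableSet_Ioi (a := x))
            (fun t (_ : t ∈ Set.Ioi x) => (Real.exp_pos (-(π/4) * t^2)).le)]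

lemma sign_pos_int (k : ℤ) (hk : 0 ≤ k) : Real.sign (2*(k:ℝ)+3/2) = 1 := by
  apply Real.sign_of_pos
  have : (0:ℝ) ≤ k := by exact_mod_cast hk
  linarith

lemma sign_neg_int (k : ℤ) (hk : k < 0) : Real.sign (2*(k:ℝ)+3/2) = -1 := by
  apply Real.sign_of_neg
  have hk1 : k ≤ -1 := by omega
  have : (k:ℝ) ≤ -1 := by exact_mod_cast hk1
  linarith

lemma sign_flip (k : ℤ) : Real.sign (-2*(k:ℝ)-1/2) = - Real.sign (2*(k:ℝ)+3/2) := by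
  rcases le_or_gt 0 k with hk | hk
  · rw [sign_pos_int k hk]
    apply Real.sign_of_neg
    have : (0:ℝ) ≤ k := by exact_mod_cast hk
    linarith
  · rw [sign_neg_int k hk]
    have hk1 : k ≤ -1 := by omega
    have : (k:ℝ) ≤ -1 := by exact_mod_cast hk1
    rw [Real.sign_of_pos (by linarith)]
    norm_num

lemma him4' (T : ℝ) : (Complex.I*(T:ℂ)/4).im = T/4 := by
  simp [Complex.div_im]

noncomputable def f1 (T : ℝ) (k : ℤ) : ℂ :=
  ((Real.sign (2*(k:ℝ)+3/2) - Efun (2*(k:ℝ)*Real.sqrt T) : ℝ) : ℂ) *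
    Complex.exp (((2*π*T*(k:ℝ)^2 - π*T/8 : ℝ) : ℂ))

noncomputable def g2 (T : ℝ) (k : ℤ) : ℂ :=
  ((Real.sign (2*(k:ℝ)+3/2) - Efun ((2*(k:ℝ)+1)*Real.sqrt T) : ℝ) : ℂ) *
    Complex.exp (((2*π*T*((k:ℝ)^2+(k:ℝ)) + 3*π*T/8 : ℝ) : ℂ))

lemma norm_aux (c r : ℝ) : ‖((c:ℂ)) * Complex.exp ((r:ℝ):ℂ)‖ = |c| * Real.exp r := by
  rw [norm_mul, ← Complex.ofReal_exp, Complex.norm_real, Complex.norm_real,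
    Real.norm_eq_abs, Real.norm_eq_abs, abs_of_pos (Real.exp_pos r)]

lemma coeff_bound (T : ℝ) (hT : 0 < T) (k : ℤ) :
    |Real.sign (2*(k:ℝ)+3/2) - Efun (2*(k:ℝ)*Real.sqrt T)| ≤ 4 * Real.exp (-3*π*T*(k:ℝ)^2) := by
  have key : ∀ y : ℝ, 0 ≤ y → |1 - Efun (2*y*Real.sqrt T)| ≤ 4 * Real.exp (-3*π*T*y^2) := by
    intro y hy
    have hxy : 0 ≤ 2*y*Real.sqrt T := by positivity
    obtain ⟨hb1, hb2⟩ := efun_tail_bound _ hxy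
    rw [_root_.abs_of_nonneg hb1]
    have hsq : (2*y*Real.sqrt T)^2 = 4*y^2*T := by
      rw [mul_pow, mul_pow, Real.sq_sqrt hT.le]; ring
    calc 1 - Efun (2*y*Real.sqrt T) ≤ 4 * Real.exp (-3*π*(2*y*Real.sqrt T)^2/4) := hb2
      _ = 4 * Real.exp (-3*π*T*y^2) := by rw [hsq]; ring_nf
  rcases le_or_gt 0 k with hk | hk
  · rw [sign_pos_int k hk]
    have : (0:ℝ) ≤ k := by exact_mod_cast hk
    exact key (k:ℝ) this
  · rw [sign_neg_int k hk]
    have h0 : (0:ℝ) ≤ -(k:ℝ) := by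
      have : (k:ℝ) < 0 := by exact_mod_cast hk
      linarith
    have := key (-(k:ℝ)) h0
    rw [show 2*(-(k:ℝ))*Real.sqrt T = -(2*(k:ℝ)*Real.sqrt T) by ring, efun_neg,
      show (-(k:ℝ))^2 = (k:ℝ)^2 by ring] at this
    calc |(-1:ℝ) - Efun (2*(k:ℝ)*Real.sqrt T)|
        = |1 - -Efun (2*(k:ℝ)*Real.sqrt T)| := by rw [abs_sub_comm]; congr 1; ring
      _ ≤ 4 * Real.exp (-3*π*T*(k:ℝ)^2) := this

lemma f1_norm (T : ℝ) (hT : 0 < T) (k : ℤ) : ‖f1 T k‖ ≤ 4 * Real.exp (-π*T*(k:ℝ)^2) := by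
  rw [f1, norm_aux]
  calc |Real.sign (2*(k:ℝ)+3/2) - Efun (2*(k:ℝ)*Real.sqrt T)|
        * Real.exp (2*π*T*(k:ℝ)^2 - π*T/8)
      ≤ (4 * Real.exp (-3*π*T*(k:ℝ)^2)) * Real.exp (2*π*T*(k:ℝ)^2 - π*T/8) :=
        mul_le_mul_of_nonneg_right (coeff_bound T hT k) (Real.exp_pos _).le
    _ = 4 * Real.exp (-π*T*(k:ℝ)^2 + -(π*T/8)) := by
        rw [mul_assoc, ← Real.exp_add]; ring_nf
    _ ≤ 4 * Real.exp (-π*T*(k:ℝ)^2) := by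
        have h1 : -π*T*(k:ℝ)^2 + -(π*T/8) ≤ -π*T*(k:ℝ)^2 := by nlinarith [pi_pos]
        have := Real.exp_le_exp.mpr h1
        linarith

lemma gsum (T : ℝ) (hT : 0 < T) : Summable fun k : ℤ => 4 * Real.exp (-π*T*(k:ℝ)^2) := by
  have hr1 : Real.exp (-(π*T)) < 1 := by
    rw [Real.exp_lt_one_iff]
    have : 0 < π*T := by positivity
    linarith
  have hnat : Summable fun n : ℕ => 4 * Real.exp (-π*T*(n:ℝ)^2) := by
    have hgeo : Summable fun n : ℕ => 4 * Real.exp (-(π*T)) ^ n :=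
      (summable_geometric_of_lt_one (Real.exp_pos _).le hr1).mul_left 4
    refine Summable.of_nonneg_of_le (fun n => by positivity) (fun n => ?_) hgeo
    have hle : (n:ℝ) ≤ (n:ℝ)^2 := by
      have : n ≤ n^2 := Nat.le_self_pow two_ne_zero n
      exact_mod_cast this
    rw [← Real.exp_nat_mul]
    have h3 : (π*T)*(n:ℝ) ≤ (π*T)*(n:ℝ)^2 :=
      mul_le_mul_of_nonneg_left hle (by positivity)
    have h2 : -π*T*(n:ℝ)^2 ≤ (n:ℝ) * -(π*T) := by nlinarith
    have := Real.exp_le_exp.mpr h2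
    linarith
  have hpos : Summable fun n : ℕ => (fun k : ℤ => 4 * Real.exp (-π*T*(k:ℝ)^2)) (n:ℤ) := by
    refine hnat.congr fun n => ?_
    push_cast
    ring_nf
  have hneg : Summable fun n : ℕ => (fun k : ℤ => 4 * Real.exp (-π*T*(k:ℝ)^2)) (-(n:ℤ)) := by
    refine hnat.congr fun n => ?_
    push_cast
    ring_nf
  exact Summable.of_nat_of_neg hpos hneg

lemma f1_summable (T : ℝ) (hT : 0 < T) : Summable (f1 T) :=
  Summable.of_norm_bounded (gsum T hT) (f1_norm T hT)

lemma f1_odd (T : ℝ) (k : ℤ) (hk : k ≠ 0) : f1 T (-k) = - f1 T k := by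
  rcases lt_or_gt_of_ne hk with h | h
  · rw [f1, f1, sign_neg_int k h, sign_pos_int (-k) (by omega),
      show ((-k:ℤ):ℝ) = -(k:ℝ) by push_cast; ring,
      show 2*(-(k:ℝ))*Real.sqrt T = -(2*(k:ℝ)*Real.sqrt T) by ring, efun_neg,
      show (-(k:ℝ))^2 = (k:ℝ)^2 by ring]
    push_cast
    ring
  · rw [f1, f1, sign_pos_int k h.le, sign_neg_int (-k) (by omega),
      show ((-k:ℤ):ℝ) = -(k:ℝ) by push_cast; ring,
      show 2*(-(k:ℝ))*Real.sqrt T = -(2*(k:ℝ)*Real.sqrt T) by ring, efun_neg,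
      show (-(k:ℝ))^2 = (k:ℝ)^2 by ring]
    push_cast
    ring

lemma g2_flip (T : ℝ) (k : ℤ) : g2 T (-1-k) = - g2 T k := by
  rw [g2, g2, show ((-1-k:ℤ):ℝ) = -1-(k:ℝ) by push_cast; ring,
    show 2*(-1-(k:ℝ))+3/2 = -2*(k:ℝ)-1/2 by ring, sign_flip,
    show (2*(-1-(k:ℝ))+1)*Real.sqrt T = -((2*(k:ℝ)+1)*Real.sqrt T) by ring, efun_neg,
    show ((-1-(k:ℝ))^2+(-1-(k:ℝ))) = ((k:ℝ)^2+(k:ℝ)) by ring]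
  push_cast
  ring

theorem stmt16 (T : ℝ) (hT : 0 < T) :
    Rfun (1/2) 1 (Complex.I*T) (Complex.I*T/4) =
        Complex.exp (2*(π:ℂ)*Complex.I*(Complex.I*(T:ℂ))*(1/16)) ∧
      Rfun (3/2) 1 (Complex.I*T) (Complex.I*T/4) = 0 := by
  have himT : (Complex.I*(T:ℂ)).im = T := by simp
  have him4 : (Complex.I*(T:ℂ)/4).im = T/4 := him4' T
  have hqr : (T/4)/T = 1/4 := by field_simp
  constructor
  · -- j = 1/2
    have h1 : Rfun (1/2) 1 (Complex.I*T) (Complex.I*T/4) = ∑' k : ℤ, f1 T k := by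
      rw [Rfun]
      refine tsum_congr fun k => ?_
      have e1 : (1/2 + 2*1*(k:ℝ) - 1/2 - 1/2 + 2*1) = 2*(k:ℝ)+3/2 := by ring
      have e2 : ((1:ℝ)/2 + 2*1*(k:ℝ) - 2*1*((Complex.I*(T:ℂ)/4).im/(Complex.I*(T:ℂ)).im)) *
          Real.sqrt ((Complex.I*(T:ℂ)).im/1) = 2*(k:ℝ)*Real.sqrt T := by
        rw [him4, himT, div_one, hqr]; ring
      have e3 : -((π:ℂ)*Complex.I*(((1/2:ℝ):ℂ)+2*((1:ℝ):ℂ)*(k:ℂ))^2*(Complex.I*(T:ℂ)))/(2*((1:ℝ):ℂ))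
            + 2*(π:ℂ)*Complex.I*(((1/2:ℝ):ℂ)+2*((1:ℝ):ℂ)*(k:ℂ))*(Complex.I*(T:ℂ)/4)
          = ((2*π*T*(k:ℝ)^2 - π*T/8 : ℝ) : ℂ) := by
        push_cast
        linear_combination (-(π*T*((1/2+2*(k:ℂ))^2-(1/2+2*(k:ℂ))))/2) * Complex.I_sq
      rw [f1, e1, e2, e3]
    have hsum := f1_summable T hT
    have hsum' : Summable fun k : ℤ => f1 T (-k) := hsum.comp_injective neg_injective
    have hneg : ∑' k : ℤ, f1 T (-k) = ∑' k : ℤ, f1 T k := (Equiv.neg ℤ).tsum_eq (f1 T)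
    have hself : ∑' k : ℤ, (f1 T k + f1 T (-k)) = 2 * f1 T 0 := by
      rw [tsum_eq_single 0 (fun b hb => by rw [f1_odd T b hb]; ring)]
      simp only [neg_zero]
      ring
    have hsplit : ∑' k : ℤ, (f1 T k + f1 T (-k))
        = (∑' k : ℤ, f1 T k) + ∑' k : ℤ, f1 T (-k) := Summable.tsum_add hsum hsum'
    have htot : ∑' k : ℤ, f1 T k = f1 T 0 := by
      have : 2 * (∑' k : ℤ, f1 T k) = 2 * f1 T 0 := by
        rw [← hself, hsplit, hneg]; ring
      exact mul_left_cancel₀ two_ne_zero this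
    have hf0 : f1 T 0 = Complex.exp (2*(π:ℂ)*Complex.I*(Complex.I*(T:ℂ))*(1/16)) := by
      rw [f1]
      rw [show ((0:ℤ):ℝ) = 0 by norm_num]
      rw [Real.sign_of_pos (show (0:ℝ) < 2*0+3/2 by norm_num)]
      norm_num [efun_zero]
      congr 1
      push_cast
      linear_combination (-(π*T/8)) * Complex.I_sq
    rw [h1, htot, hf0]
  · -- j = 3/2
    have h2 : Rfun (3/2) 1 (Complex.I*T) (Complex.I*T/4) = ∑' k : ℤ, g2 T k := by
      rw [Rfun]
      refine tsum_congr fun k => ?_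
      have e1 : (3/2 + 2*1*(k:ℝ) - 1/2 - 3/2 + 2*1) = 2*(k:ℝ)+3/2 := by ring
      have e2 : ((3:ℝ)/2 + 2*1*(k:ℝ) - 2*1*((Complex.I*(T:ℂ)/4).im/(Complex.I*(T:ℂ)).im)) *
          Real.sqrt ((Complex.I*(T:ℂ)).im/1) = (2*(k:ℝ)+1)*Real.sqrt T := by
        rw [him4, himT, div_one, hqr]; ring
      have e3 : -((π:ℂ)*Complex.I*(((3/2:ℝ):ℂ)+2*((1:ℝ):ℂ)*(k:ℂ))^2*(Complex.I*(T:ℂ)))/(2*((1:ℝ):ℂ))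
            + 2*(π:ℂ)*Complex.I*(((3/2:ℝ):ℂ)+2*((1:ℝ):ℂ)*(k:ℂ))*(Complex.I*(T:ℂ)/4)
          = ((2*π*T*((k:ℝ)^2+(k:ℝ)) + 3*π*T/8 : ℝ) : ℂ) := by
        push_cast
        linear_combination (-(π*T*((3/2+2*(k:ℂ))^2-(3/2+2*(k:ℂ))))/2) * Complex.I_sq
      rw [g2, e1, e2, e3]
    have hE : ∑' k : ℤ, g2 T k = - ∑' k : ℤ, g2 T k := by
      conv_lhs => rw [← Equiv.tsum_eq
        (⟨fun k => -1-k, fun k => -1-k, fun k => by ring, fun k => by ring⟩ : ℤ ≃ ℤ) (g2 T)]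
      calc ∑' k : ℤ, g2 T (-1-k) = ∑' k : ℤ, -(g2 T k) := tsum_congr fun k => g2_flip T k
        _ = - ∑' k : ℤ, g2 T k := tsum_neg
    have : ∑' k : ℤ, g2 T k = 0 := by
      have h := hE
      have : (∑' k : ℤ, g2 T k) + (∑' k : ℤ, g2 T k) = 0 := by
        nth_rewrite 1 [h]; ring
      exact add_self_eq_zero.mp this
    rw [h2, this]

end
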